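/- Let N ≥ 1, let 2* = 2N/(N−2) for N ≥ 3 and 2* = +∞ for N ∈ {1,2}, and let f : ℝᴺ × ℝ → ℝ be continuous satisfying: (F1) there exist p ∈ (2, 2*) and C₀ > 0 with |f(x,t)| ≤ C₀(1 + |t|^{p−1}) for all (x,t); (F2) f(x,t) = o(|t|) as t → 0 uniformly in x, and F(x,t) := ∫₀ᵗ f(x,s) ds ≥ 0; (F3) f(x,t) is 1-periodic in each of x₁,…,x_N; (DL) 𝓕(x,t) := (1/2) t f(x,t) − F(x,t) > 0 for all x and all t ≠ 0, and there exist c₀ > 0, r₀ > 0 and κ > max{1, N/2} such that |f(x,t)|^κ ≤ c₀ 𝓕(x,t) |t|^κ for all (x,t) with |t| ≥ r₀. Then f satisfies (F4): 𝓕(x,t) ≥ 0 for all (x,t), and for every Λ > 0 and every δ₀ ∈ (0, Λ) there exists c₁ > 0 such that for all (x,t) with t ≠ 0, if f(x,t)/t ≥ Λ − δ₀ then (f(x,t)/t)^κ ≤ c₁ 𝓕(x,t). -/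
import Mathlib


open Filter Topology

/-- **(F1), (F2), (F3), (DL) imply (F4).** Let `N ≥ 1`, `2* = 2N/(N−2)` for
`N ≥ 3` (`= ∞` for `N ≤ 2`), and `f : ℝᴺ × ℝ → ℝ` continuous satisfying the
subcritical growth (F1), `f(x,t) = o(|t|)` as `t → 0` uniformly in `x` and
`F ≥ 0` (F2), 1-periodicity in each `xᵢ` (F3), and the Ding–Lee condition (DL):
`𝓕(x,t) = (1/2) t f(x,t) − F(x,t) > 0` for `t ≠ 0`, and there are `c₀, r₀ > 0`,
`κ > max{1, N/2}` with `|f(x,t)|^κ ≤ c₀ 𝓕(x,t) |t|^κ` for `|t| ≥ r₀`. Then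
`𝓕 ≥ 0` and for every `Λ > 0`, `δ₀ ∈ (0,Λ)` there is `c₁ > 0` such that
`t ≠ 0` and `f(x,t)/t ≥ Λ − δ₀` imply `(f(x,t)/t)^κ ≤ c₁ 𝓕(x,t)`. -/
theorem DL_implies_F4 (N : ℕ) (hN : 1 ≤ N)
    (f F : (Fin N → ℝ) → ℝ → ℝ)
    (hf : Continuous fun p : (Fin N → ℝ) × ℝ => f p.1 p.2)
    (hF : ∀ x t, F x t = ∫ s in (0:ℝ)..t, f x s)
    -- (F1)
    (p C₀ : ℝ) (hp : 2 < p) (hpsub : 3 ≤ N → p < 2 * N / (N - 2)) (hC₀ : 0 < C₀)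
    (hgrowth : ∀ x t, |f x t| ≤ C₀ * (1 + |t| ^ (p - 1)))
    -- (F2)
    (hsmall : ∀ ε > 0, ∃ δ > 0, ∀ x t, |t| < δ → |f x t| ≤ ε * |t|)
    (hFnonneg : ∀ x t, 0 ≤ F x t)
    -- (F3): 1-periodicity in each coordinate of x
    (hper : ∀ (x : Fin N → ℝ) (k : Fin N → ℤ) (t : ℝ),
      f (fun i => x i + k i) t = f x t)
    -- (DL)
    (c₀ r₀ κ : ℝ) (hc₀ : 0 < c₀) (hr₀ : 0 < r₀) (hκ : max 1 ((N : ℝ) / 2) < κ)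
    (hDLpos : ∀ x t, t ≠ 0 → 0 < (1 / 2) * t * f x t - F x t)
    (hDL : ∀ x t, r₀ ≤ |t| →
      |f x t| ^ κ ≤ c₀ * ((1 / 2) * t * f x t - F x t) * |t| ^ κ) :
    (∀ x t, 0 ≤ (1 / 2) * t * f x t - F x t) ∧
    ∀ Λ : ℝ, 0 < Λ → ∀ δ₀ ∈ Set.Ioo 0 Λ,
      ∃ c₁ > (0:ℝ), ∀ x t, t ≠ 0 → Λ - δ₀ ≤ f x t / t →
        (f x t / t) ^ κ ≤ c₁ * ((1 / 2) * t * f x t - F x t) := by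
  -- 𝓕 ≥ 0
  have hG0 : ∀ x t, 0 ≤ (1 / 2) * t * f x t - F x t := by
    intro x t
    rcases eq_or_ne t 0 with rfl | ht
    · have : F x 0 = 0 := by rw [hF]; simp
      simp [this]
    · exact (hDLpos x t ht).le
  refine ⟨hG0, ?_⟩
  -- continuity of F
  have hFcont : Continuous fun q : (Fin N → ℝ) × ℝ => F q.1 q.2 := by
    have : Continuous fun q : (Fin N → ℝ) × ℝ => ∫ s in (0:ℝ)..q.2, f q.1 s :=
      intervalIntegral.continuous_parametric_primitive_of_continuous (μ := MeasureTheory.volume)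
        (f := f) hf
    simpa only [hF] using this
  -- continuity of 𝓕
  set G : (Fin N → ℝ) × ℝ → ℝ := fun q => (1 / 2) * q.2 * f q.1 q.2 - F q.1 q.2 with hGdef
  have hGcont : Continuous G := by
    apply Continuous.sub _ hFcont
    exact (continuous_const.mul continuous_snd).mul hf
  -- periodicity of F and 𝓕
  have hFper : ∀ (x : Fin N → ℝ) (k : Fin N → ℤ) (t : ℝ),
      F (fun i => x i + k i) t = F x t := by
    intro x k t
    rw [hF, hF]
    simp only [hper]
  intro Λ hΛ δ₀ hδ₀
  obtain ⟨δ, hδpos, hδ⟩ := hsmall ((Λ - δ₀) / 2) (by have := hδ₀.2; linarith)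
  set δ' : ℝ := min δ r₀ with hδ'def
  have hδ'pos : 0 < δ' := lt_min hδpos hr₀
  have hδ'r₀ : δ' ≤ r₀ := min_le_right _ _
  -- compact set
  set K : Set ((Fin N → ℝ) × ℝ) :=
    (Set.Icc (0 : Fin N → ℝ) 1) ×ˢ (Set.Icc (-r₀) r₀ ∩ {t : ℝ | δ' ≤ |t|}) with hKdef
  have hKcomp : IsCompact K :=
    isCompact_Icc.prod (isCompact_Icc.inter_right
      (isClosed_le continuous_const continuous_abs))
  have hKne : K.Nonempty := by
    refine ⟨(fun _ => 0, r₀), ?_, ?_, ?_⟩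
    · exact Set.mem_Icc.2 ⟨le_refl _, fun i => zero_le_one⟩
    · constructor <;> simp <;> linarith
    · simpa [abs_of_pos hr₀] using hδ'r₀
  obtain ⟨q₀, hq₀K, hq₀min⟩ := hKcomp.exists_isMinOn hKne hGcont.continuousOn
  set m : ℝ := G q₀ with hmdef
  have hmpos : 0 < m := by
    apply hDLpos q₀.1 q₀.2
    have : δ' ≤ |q₀.2| := hq₀K.2.2
    intro h; rw [h] at this; simp at this; linarith
  -- global bound on f/t for δ' ≤ |t| ≤ r₀
  set M : ℝ := C₀ * (1 + (1 + r₀ ^ (p - 1))) / δ' with hMdef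
  have hMpos : 0 < M := by
    apply div_pos _ hδ'pos
    have h1 : (0:ℝ) ≤ r₀ ^ (p - 1) := Real.rpow_nonneg hr₀.le _
    positivity
  set c₁ : ℝ := max c₀ (M ^ κ / m) with hc₁def
  have hc₁pos : 0 < c₁ := lt_max_of_lt_left hc₀
  refine ⟨c₁, hc₁pos, ?_⟩
  intro x t ht hft
  have hΛδ : 0 < Λ - δ₀ := by have := hδ₀.2; linarith
  have hftpos : 0 < f x t / t := lt_of_lt_of_le hΛδ hft
  have habs : |t| ≠ 0 := abs_ne_zero.2 ht
  have habspos : 0 < |t| := abs_pos.2 ht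
  rcases le_or_gt r₀ |t| with hbig | hsmallt
  · -- large |t| : use hDL
    have h1 := hDL x t hbig
    have hdivabs : f x t / t = |f x t| / |t| := by
      rw [← abs_div]; exact (abs_of_pos hftpos).symm
    have h2 : (f x t / t) ^ κ ≤ c₀ * G (x, t) := by
      rw [hdivabs, Real.div_rpow (abs_nonneg _) (abs_nonneg _)]
      rw [div_le_iff₀ (Real.rpow_pos_of_pos habspos κ)]
      exact h1
    calc (f x t / t) ^ κ ≤ c₀ * G (x, t) := h2
      _ ≤ c₁ * G (x, t) := by
          apply mul_le_mul_of_nonneg_right (le_max_left _ _) (hG0 x t)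
  · -- small |t|
    -- first |t| ≥ δ'
    have htδ : δ' ≤ |t| := by
      by_contra hlt
      push_neg at hlt
      have h1 := hδ x t (lt_of_lt_of_le hlt (min_le_left _ _))
      have h2 : f x t / t ≤ |f x t| / |t| := by
        rw [← abs_div]; exact le_abs_self _
      have h3 : |f x t| / |t| ≤ (Λ - δ₀) / 2 := by
        rw [div_le_iff₀ habspos]; linarith
      linarith [hft, h2.trans h3]
    -- reduce x to the unit cube
    set x' : Fin N → ℝ := fun i => Int.fract (x i) with hx'def
    have hx'eq : ∀ s, f x' s = f x s := by
      intro s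
      have : x' = fun i => x i + ((-⌊x i⌋ : ℤ) : ℝ) := by
        funext i
        simp [hx'def, Int.fract, sub_eq_add_neg]
      rw [this]
      exact hper x (fun i => -⌊x i⌋) s
    have hF'eq : F x' t = F x t := by
      rw [hF, hF]; simp only [hx'eq]
    have hGeq : G (x', t) = G (x, t) := by
      simp only [hGdef, hx'eq, hF'eq]
    have hmem : (x', t) ∈ K := by
      refine ⟨Set.mem_Icc.2 ⟨fun i => (Int.fract_nonneg _), fun i => (Int.fract_lt_one _).le⟩,
        ?_, htδ⟩
      exact abs_le.1 (le_of_lt hsmallt)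
    have hGm : m ≤ G (x, t) := by
      rw [← hGeq]; exact hq₀min hmem
    -- bound f/t by M
    have hfM : f x t / t ≤ M := by
      have h1 : |f x t| ≤ C₀ * (1 + |t| ^ (p - 1)) := hgrowth x t
      have h2 : |t| ^ (p - 1) ≤ 1 + r₀ ^ (p - 1) := by
        rcases le_or_gt |t| 1 with h | h
        · have : |t| ^ (p - 1) ≤ 1 ^ (p - 1) :=
            Real.rpow_le_rpow (abs_nonneg _) h (by linarith)
          rw [Real.one_rpow] at this
          have : |t| ^ (p - 1) ≤ 1 := this
          have h0 : (0:ℝ) ≤ r₀ ^ (p - 1) := Real.rpow_nonneg hr₀.le _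
          linarith
        · have : |t| ^ (p - 1) ≤ r₀ ^ (p - 1) :=
            Real.rpow_le_rpow (abs_nonneg _) hsmallt.le (by linarith)
          linarith
      have h3 : |f x t| ≤ C₀ * (1 + (1 + r₀ ^ (p - 1))) := by
        calc |f x t| ≤ C₀ * (1 + |t| ^ (p - 1)) := h1
          _ ≤ C₀ * (1 + (1 + r₀ ^ (p - 1))) := by
              apply mul_le_mul_of_nonneg_left _ hC₀.le; linarith
      calc f x t / t ≤ |f x t| / |t| := by rw [← abs_div]; exact le_abs_self _
        _ ≤ C₀ * (1 + (1 + r₀ ^ (p - 1))) / δ' := by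
            apply div_le_div₀ _ h3 hδ'pos htδ
            have h0 : (0:ℝ) ≤ r₀ ^ (p - 1) := Real.rpow_nonneg hr₀.le _
            positivity
    calc (f x t / t) ^ κ ≤ M ^ κ := Real.rpow_le_rpow hftpos.le hfM (by
            have := hκ; have : (1:ℝ) ≤ κ := le_of_lt (lt_of_le_of_lt (le_max_left _ _) hκ)
            linarith)
      _ = (M ^ κ / m) * m := by field_simp
      _ ≤ (M ^ κ / m) * G (x, t) := by
          apply mul_le_mul_of_nonneg_left hGm
          positivity
      _ ≤ c₁ * G (x, t) := by
          apply mul_le_mul_of_nonneg_right (le_max_right _ _) (hG0 x t)
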